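/- Let T, d, D = d+1 be positive integers, and let K be an integer with 0 ≤ K and K + d ≤ T. The D × D matrix H with entries H[u][v] = binom(T, T − K + u − v) (0 ≤ u, v ≤ d) can be transformed by row operations into the matrix H' with entries H'[u][v] = binom(T + d − u, T − K + d − v); in particular det(H) = det(H'). -/

import Mathlib

open Finset

/-- Vandermonde truncated to `range (m+1)`. -/
lemma vand_trunc (t m n : ℕ) (h : m ≤ n) :
    (t + m).choose n = ∑ k ∈ Finset.range (m + 1), m.choose k * t.choose (n - k) := by
  rw [Nat.add_choose_eq, Finset.Nat.sum_antidiagonal_eq_sum_range_succ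
    (fun i j => t.choose i * m.choose j) n]
  rw [← Finset.sum_range_reflect]
  have step : ∀ k ∈ Finset.range (n + 1),
      t.choose (n + 1 - 1 - k) * m.choose (n - (n + 1 - 1 - k))
      = t.choose (n - k) * m.choose k := by
    intro k hk
    simp only [Finset.mem_range] at hk
    have e2 : n - (n + 1 - 1 - k) = k := by omega
    have e1 : n + 1 - 1 - k = n - k := by omega
    rw [e2, e1]
  rw [Finset.sum_congr rfl step]
  rw [← Finset.sum_subset (Finset.range_subset_range.2 (Nat.succ_le_succ h))
    (f := fun k => t.choose (n - k) * m.choose k)]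
  · exact Finset.sum_congr rfl fun k _ => mul_comm _ _
  · intro k _ hk
    simp only [Finset.mem_range, not_lt] at hk
    rw [Nat.choose_eq_zero_of_lt hk, mul_zero]

/-- Row operations transform the binomial block matrix H[u][v] = binom(T, T-K+u-v)
into H'[u][v] = binom(T+d-u, T-K+d-v); in particular the determinants agree. -/
theorem binomial_block_row_transform (T d D K : ℕ) (hD : D = d + 1)
    (hK : K + d ≤ T) :
    Matrix.det (fun u v : Fin D =>
        ((T.choose (T - K + (u : ℕ) - (v : ℕ)) : ℕ) : ℚ))
    = Matrix.det (fun u v : Fin D =>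
        (((T + d - (u : ℕ)).choose (T - K + d - (v : ℕ)) : ℕ) : ℚ)) := by
  subst hD
  set L : Matrix (Fin (d + 1)) (Fin (d + 1)) ℚ :=
    fun u w => (((d - (u : ℕ)).choose (d - (w : ℕ)) : ℕ) : ℚ) with hL
  have hmul : (fun u v : Fin (d + 1) =>
      (((T + d - (u : ℕ)).choose (T - K + d - (v : ℕ)) : ℕ) : ℚ))
      = L * Matrix.of (fun u v : Fin (d + 1) =>
        ((T.choose (T - K + (u : ℕ) - (v : ℕ)) : ℕ) : ℚ)) := by
    funext u v
    have hu : (u : ℕ) ≤ d := Nat.lt_succ_iff.mp u.isLt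
    have hv : (v : ℕ) ≤ d := Nat.lt_succ_iff.mp v.isLt
    have key : (T + d - (u : ℕ)).choose (T - K + d - (v : ℕ))
        = ∑ w ∈ Finset.range (d + 1),
          (d - (u : ℕ)).choose (d - w) * T.choose (T - K + w - (v : ℕ)) := by
      have h1 : T + d - (u : ℕ) = T + (d - (u : ℕ)) := by omega
      have h2 : d - (u : ℕ) ≤ T - K + d - (v : ℕ) := by omega
      rw [h1, vand_trunc T (d - (u : ℕ)) _ h2]
      have hsub : Finset.range (d - (u : ℕ) + 1) ⊆ Finset.range (d + 1) :=
        Finset.range_subset_range.2 (by omega)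
      rw [Finset.sum_subset hsub (fun k _ hk => by
        simp only [Finset.mem_range, not_lt] at hk
        rw [Nat.choose_eq_zero_of_lt (by omega), zero_mul])]
      rw [← Finset.sum_range_reflect]
      refine Finset.sum_congr rfl fun k hk => ?_
      simp only [Finset.mem_range] at hk
      have e1 : d + 1 - 1 - k = d - k := by omega
      rw [e1]
      have e2 : T - K + d - (v : ℕ) - (d - k) = T - K + k - (v : ℕ) := by omega
      rw [e2]
    rw [Matrix.mul_apply]
    simp only [Matrix.mul_apply, Matrix.of_apply, hL]
    rw [Fin.sum_univ_eq_sum_range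
      (fun w => (((d - (u : ℕ)).choose (d - w) : ℕ) : ℚ) *
        ((T.choose (T - K + w - (v : ℕ)) : ℕ) : ℚ))]
    rw [key]
    push_cast
    rfl
  rw [hmul, Matrix.det_mul]
  have hdiag : L.det = 1 := by
    have htri : L.BlockTriangular id := by
      intro i j hij
      simp only [id_eq] at hij
      have hlt : d - (i : ℕ) < d - (j : ℕ) := by
        have := j.isLt; have := i.isLt; omega
      simp [hL, Nat.choose_eq_zero_of_lt hlt]
    rw [Matrix.det_of_upperTriangular htri]
    refine Finset.prod_eq_one fun i _ => ?_
    simp [hL]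
  rw [hdiag, one_mul]
  rfl
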